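/- Let A : H₁ → H₂ be a bounded linear operator with ‖A‖ > 0 and let T : H₂ → H₂ be quasi-nonexpansive with (im A) ∩ Fix T ≠ ∅. Then the fixed point set of the Landweber-type operator V := Id + ‖A‖⁻² A*(T − Id)A equals A⁻¹(Fix T), i.e., Vx = x if and only if T(Ax) = Ax. -/
import Mathlib

open scoped RealInnerProductSpace

theorem stmt_8 {H₁ H₂ : Type*} [NormedAddCommGroup H₁] [InnerProductSpace ℝ H₁]
    [CompleteSpace H₁] [NormedAddCommGroup H₂] [InnerProductSpace ℝ H₂] [CompleteSpace H₂]
    (A : H₁ →L[ℝ] H₂) (hA : ‖A‖ > 0)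
    (T : H₂ → H₂)
    (hfix : ∃ z : H₂, T z = z)
    (hT : ∀ (u z : H₂), T z = z → ‖T u - z‖ ≤ ‖u - z‖)
    (him : ∃ w : H₁, T (A w) = A w)
    (V : H₁ → H₁)
    (hV : ∀ x : H₁, V x = x + (‖A‖ ^ 2)⁻¹ • (ContinuousLinearMap.adjoint A) (T (A x) - A x)) :
    ∀ x : H₁, V x = x ↔ T (A x) = A x := by
  intro x
  constructor
  · intro hVx
    obtain ⟨w, hw⟩ := him
    -- from V x = x deduce adjoint A (T(Ax) - Ax) = 0
    have h0 : (‖A‖ ^ 2)⁻¹ • (ContinuousLinearMap.adjoint A) (T (A x) - A x) = 0 := by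
      have := (hV x).symm.trans hVx
      have h := left_eq_add.mp this.symm
      exact h
    have hA2 : (‖A‖ ^ 2)⁻¹ ≠ 0 := by positivity
    have hadj : (ContinuousLinearMap.adjoint A) (T (A x) - A x) = 0 := by
      exact (smul_eq_zero.mp h0).resolve_left hA2
    -- inner product orthogonality
    have horth : ⟪T (A x) - A x, A x - A w⟫ = 0 := by
      have : ⟪T (A x) - A x, A (x - w)⟫ = 0 := by
        rw [← ContinuousLinearMap.adjoint_inner_left, hadj, inner_zero_left]
      rwa [map_sub] at this
    -- quasi-nonexpansiveness
    have hq : ‖T (A x) - A w‖ ≤ ‖A x - A w‖ := hT (A x) (A w) hw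
    have hsum : T (A x) - A w = (T (A x) - A x) + (A x - A w) := by abel
    have hsq : ‖T (A x) - A w‖ ^ 2 = ‖T (A x) - A x‖ ^ 2 + ‖A x - A w‖ ^ 2 := by
      rw [hsum, norm_add_sq_real, horth]
      ring
    have hle : ‖T (A x) - A w‖ ^ 2 ≤ ‖A x - A w‖ ^ 2 := by
      apply pow_le_pow_left₀ (norm_nonneg _) hq
    have : ‖T (A x) - A x‖ ^ 2 ≤ 0 := by nlinarith [hsq, hle]
    have hz : ‖T (A x) - A x‖ = 0 := by nlinarith [norm_nonneg (T (A x) - A x)]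
    exact sub_eq_zero.mp (norm_eq_zero.mp hz)
  · intro h
    rw [hV x, h, sub_self, map_zero, smul_zero, add_zero]
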